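/- For the 2-leg spider with span bounded by s over the simple random walk on the homogeneous tree T_3, encode a configuration by (l,k), where l=d(x_1,x_2) is the distance between the two legs and k=|h(x_1)−h(x_2)| is their height difference with respect to the root. This factor process is a continuous-time Markov chain with rates: from (1,1), rate 3 to (2,2) and rate 1 to (2,0); from (l,l) with 1<l<s, rate 3 to (l+1,l+1), rate 1 to (l+1,l−1) and rate 2 to (l−1,l−1); from (s,s), rate 2 to (s−1,s−1); from (l,0) with 0<l<s, rate 2 to (l−1,1) and rate 4 to (l+1,1); from (s,0), rate 2 to (s−1,1); from (l,k) with 0<l<s, 0<k<l, rate 1 to each of (l+1,k+1) and (l+1,k−1) and rate 2 to each of (l−1,k+1) and (l−1,k−1); from (s,k) with 0<k<s, rate 1 to each of (s−1,k−1) and (s−1,k+1). Let Π_s be its stationary distribution and B_s={(l,0): 1≤l≤s}. Then Π_s(B_s)→0 as s→∞. -/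

import Mathlib

/- STATEMENT 17: The (l,k) factor chain of the 2-leg spider with span bounded by s
over the SRW on T₃ (l = distance between the legs, k = height difference) has the
explicit rates listed below; if Π_s is its stationary distribution and
B_s = {(l,0) : 1 ≤ l ≤ s}, then Π_s(B_s) → 0 as s → ∞. -/

open Classical in
/-- The rates of the factor chain on pairs (l,k) for span bound `s`. -/
noncomputable def factorRate (s : ℕ) (v w : ℕ × ℕ) : ℝ :=
  let l := v.1; let k := v.2
  if l = 1 ∧ k = 1 then
    (if w = (2, 2) then 3 else if w = (2, 0) then 1 else 0)
  else if k = l ∧ 1 < l ∧ l < s then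
    (if w = (l + 1, l + 1) then 3 else if w = (l + 1, l - 1) then 1
     else if w = (l - 1, l - 1) then 2 else 0)
  else if l = s ∧ k = s then
    (if w = (s - 1, s - 1) then 2 else 0)
  else if k = 0 ∧ 0 < l ∧ l < s then
    (if w = (l - 1, 1) then 2 else if w = (l + 1, 1) then 4 else 0)
  else if l = s ∧ k = 0 then
    (if w = (s - 1, 1) then 2 else 0)
  else if 0 < l ∧ l < s ∧ 0 < k ∧ k < l then
    (if w = (l + 1, k + 1) ∨ w = (l + 1, k - 1) then 1
     else if w = (l - 1, k + 1) ∨ w = (l - 1, k - 1) then 2 else 0)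
  else if l = s ∧ 0 < k ∧ k < s then
    (if w = (s - 1, k - 1) ∨ w = (s - 1, k + 1) then 1 else 0)
  else 0

/-- The states of the factor chain: 1 ≤ l ≤ s, k ≤ l, and k ≡ l (mod 2). -/
def ValidState (s : ℕ) (v : ℕ × ℕ) : Prop :=
  1 ≤ v.1 ∧ v.1 ≤ s ∧ v.2 ≤ v.1 ∧ v.1 % 2 = v.2 % 2

set_option linter.unreachableTactic false
set_option linter.unusedTactic false
set_option maxHeartbeats 1000000

noncomputable def pm (c w : ℕ × ℕ) : ℝ := if w = c then 1 else 0

abbrev SBox (s : ℕ) : Finset (ℕ × ℕ) := Finset.range (s+2) ×ˢ Finset.range (s+2)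

lemma mem_SBox {s a b : ℕ} : (a,b) ∈ SBox s ↔ a < s+2 ∧ b < s+2 := by
  simp [Finset.mem_product]

lemma sum_pm {T : Finset (ℕ × ℕ)} {c : ℕ × ℕ} (hc : c ∈ T) (f : ℕ × ℕ → ℝ) :
    ∑ w ∈ T, pm c w * f w = f c := by
  unfold pm
  simp only [ite_mul, one_mul, zero_mul]
  rw [Finset.sum_ite_eq' T c f, if_pos hc]

section NF
variable (s l k : ℕ) (w : ℕ × ℕ)

lemma nf1 (h1 : l = 1) (h2 : k = 1) :
    factorRate s (l,k) w = 3 * pm (2,2) w + pm (2,0) w := by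
  rw [factorRate]; simp only []
  rw [if_pos (show (l,k).1 = 1 ∧ (l,k).2 = 1 by simp; omega)]
  unfold pm; split_ifs <;> simp_all [Prod.ext_iff] <;> omega

lemma nf2 (h1 : k = l) (h2 : 1 < l) (h3 : l < s) :
    factorRate s (l,k) w = 3 * pm (l+1,l+1) w + pm (l+1,l-1) w + 2 * pm (l-1,l-1) w := by
  rw [factorRate]; simp only []
  rw [if_neg (show ¬((l,k).1 = 1 ∧ (l,k).2 = 1) by simp; omega),
    if_pos (show (l,k).2 = (l,k).1 ∧ 1 < (l,k).1 ∧ (l,k).1 < s by simp; omega)]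
  unfold pm; split_ifs <;> simp_all [Prod.ext_iff] <;> omega

lemma nf3 (h1 : l = s) (h2 : k = s) (hs : 2 ≤ s) :
    factorRate s (l,k) w = 2 * pm (s-1,s-1) w := by
  rw [factorRate]; simp only []
  rw [if_neg (show ¬((l,k).1 = 1 ∧ (l,k).2 = 1) by simp; omega),
    if_neg (show ¬((l,k).2 = (l,k).1 ∧ 1 < (l,k).1 ∧ (l,k).1 < s) by simp; omega),
    if_pos (show (l,k).1 = s ∧ (l,k).2 = s by simp; omega)]
  unfold pm; split_ifs <;> simp_all [Prod.ext_iff] <;> omega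

lemma nf4 (h1 : k = 0) (h2 : 0 < l) (h3 : l < s) :
    factorRate s (l,k) w = 2 * pm (l-1,1) w + 4 * pm (l+1,1) w := by
  rw [factorRate]; simp only []
  rw [if_neg (show ¬((l,k).1 = 1 ∧ (l,k).2 = 1) by simp; omega),
    if_neg (show ¬((l,k).2 = (l,k).1 ∧ 1 < (l,k).1 ∧ (l,k).1 < s) by simp; omega),
    if_neg (show ¬((l,k).1 = s ∧ (l,k).2 = s) by simp; omega),
    if_pos (show (l,k).2 = 0 ∧ 0 < (l,k).1 ∧ (l,k).1 < s by simp; omega)]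
  unfold pm; split_ifs <;> simp_all [Prod.ext_iff] <;> omega

lemma nf5 (h1 : l = s) (h2 : k = 0) (hs : 2 ≤ s) :
    factorRate s (l,k) w = 2 * pm (s-1,1) w := by
  rw [factorRate]; simp only []
  rw [if_neg (show ¬((l,k).1 = 1 ∧ (l,k).2 = 1) by simp; omega),
    if_neg (show ¬((l,k).2 = (l,k).1 ∧ 1 < (l,k).1 ∧ (l,k).1 < s) by simp; omega),
    if_neg (show ¬((l,k).1 = s ∧ (l,k).2 = s) by simp; omega),
    if_neg (show ¬((l,k).2 = 0 ∧ 0 < (l,k).1 ∧ (l,k).1 < s) by simp; omega),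
    if_pos (show (l,k).1 = s ∧ (l,k).2 = 0 by simp; omega)]
  unfold pm; split_ifs <;> simp_all [Prod.ext_iff] <;> omega

lemma nf6 (h1 : 0 < k) (h2 : k < l) (h3 : l < s) :
    factorRate s (l,k) w = pm (l+1,k+1) w + pm (l+1,k-1) w + 2 * pm (l-1,k+1) w + 2 * pm (l-1,k-1) w := by
  rw [factorRate]; simp only []
  rw [if_neg (show ¬((l,k).1 = 1 ∧ (l,k).2 = 1) by simp; omega),
    if_neg (show ¬((l,k).2 = (l,k).1 ∧ 1 < (l,k).1 ∧ (l,k).1 < s) by simp; omega),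
    if_neg (show ¬((l,k).1 = s ∧ (l,k).2 = s) by simp; omega),
    if_neg (show ¬((l,k).2 = 0 ∧ 0 < (l,k).1 ∧ (l,k).1 < s) by simp; omega),
    if_neg (show ¬((l,k).1 = s ∧ (l,k).2 = 0) by simp; omega),
    if_pos (show 0 < (l,k).1 ∧ (l,k).1 < s ∧ 0 < (l,k).2 ∧ (l,k).2 < (l,k).1 by simp; omega)]
  unfold pm; split_ifs <;> simp_all [Prod.ext_iff] <;> omega

lemma nf7 (h1 : l = s) (h2 : 0 < k) (h3 : k < s) :
    factorRate s (l,k) w = pm (s-1,k-1) w + pm (s-1,k+1) w := by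
  rw [factorRate]; simp only []
  rw [if_neg (show ¬((l,k).1 = 1 ∧ (l,k).2 = 1) by simp; omega),
    if_neg (show ¬((l,k).2 = (l,k).1 ∧ 1 < (l,k).1 ∧ (l,k).1 < s) by simp; omega),
    if_neg (show ¬((l,k).1 = s ∧ (l,k).2 = s) by simp; omega),
    if_neg (show ¬((l,k).2 = 0 ∧ 0 < (l,k).1 ∧ (l,k).1 < s) by simp; omega),
    if_neg (show ¬((l,k).1 = s ∧ (l,k).2 = 0) by simp; omega),
    if_neg (show ¬(0 < (l,k).1 ∧ (l,k).1 < s ∧ 0 < (l,k).2 ∧ (l,k).2 < (l,k).1) by simp; omega),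
    if_pos (show (l,k).1 = s ∧ 0 < (l,k).2 ∧ (l,k).2 < s by simp; omega)]
  unfold pm; split_ifs <;> simp_all [Prod.ext_iff] <;> omega

end NF

section Sums
variable (s l k : ℕ) (f : ℕ × ℕ → ℝ)

lemma sums1 (hs : 2 ≤ s) (h1 : l = 1) (h2 : k = 1) :
    ∑ w ∈ SBox s, factorRate s (l,k) w * f w = 3 * f (2,2) + f (2,0) := by
  have h : ∀ w ∈ SBox s, factorRate s (l,k) w * f w
      = (3 * pm (2,2) w + pm (2,0) w) * f w := fun w _ => by rw [nf1 s l k w h1 h2]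
  rw [Finset.sum_congr rfl h]
  simp only [add_mul, mul_assoc, Finset.sum_add_distrib, ← Finset.mul_sum]
  rw [sum_pm (c := (2,2)) (by rw [mem_SBox]; exact ⟨by omega, by omega⟩) f,
    sum_pm (c := (2,0)) (by rw [mem_SBox]; exact ⟨by omega, by omega⟩) f]

lemma sums2 (h1 : k = l) (h2 : 1 < l) (h3 : l < s) :
    ∑ w ∈ SBox s, factorRate s (l,k) w * f w
      = 3 * f (l+1,l+1) + f (l+1,l-1) + 2 * f (l-1,l-1) := by
  have h : ∀ w ∈ SBox s, factorRate s (l,k) w * f w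
      = (3 * pm (l+1,l+1) w + pm (l+1,l-1) w + 2 * pm (l-1,l-1) w) * f w :=
    fun w _ => by rw [nf2 s l k w h1 h2 h3]
  rw [Finset.sum_congr rfl h]
  simp only [add_mul, mul_assoc, Finset.sum_add_distrib, ← Finset.mul_sum]
  rw [sum_pm (by rw [mem_SBox]; exact ⟨by omega, by omega⟩) f, sum_pm (by rw [mem_SBox]; exact ⟨by omega, by omega⟩) f,
    sum_pm (by rw [mem_SBox]; exact ⟨by omega, by omega⟩) f]

lemma sums3 (h1 : l = s) (h2 : k = s) (hs : 2 ≤ s) :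
    ∑ w ∈ SBox s, factorRate s (l,k) w * f w = 2 * f (s-1,s-1) := by
  have h : ∀ w ∈ SBox s, factorRate s (l,k) w * f w
      = (2 * pm (s-1,s-1) w) * f w := fun w _ => by rw [nf3 s l k w h1 h2 hs]
  rw [Finset.sum_congr rfl h]
  simp only [mul_assoc, ← Finset.mul_sum]
  rw [sum_pm (by rw [mem_SBox]; exact ⟨by omega, by omega⟩) f]

lemma sums4 (h1 : k = 0) (h2 : 0 < l) (h3 : l < s) :
    ∑ w ∈ SBox s, factorRate s (l,k) w * f w = 2 * f (l-1,1) + 4 * f (l+1,1) := by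
  have h : ∀ w ∈ SBox s, factorRate s (l,k) w * f w
      = (2 * pm (l-1,1) w + 4 * pm (l+1,1) w) * f w := fun w _ => by rw [nf4 s l k w h1 h2 h3]
  rw [Finset.sum_congr rfl h]
  simp only [add_mul, mul_assoc, Finset.sum_add_distrib, ← Finset.mul_sum]
  rw [sum_pm (by rw [mem_SBox]; exact ⟨by omega, by omega⟩) f, sum_pm (by rw [mem_SBox]; exact ⟨by omega, by omega⟩) f]

lemma sums5 (h1 : l = s) (h2 : k = 0) (hs : 2 ≤ s) :
    ∑ w ∈ SBox s, factorRate s (l,k) w * f w = 2 * f (s-1,1) := by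
  have h : ∀ w ∈ SBox s, factorRate s (l,k) w * f w
      = (2 * pm (s-1,1) w) * f w := fun w _ => by rw [nf5 s l k w h1 h2 hs]
  rw [Finset.sum_congr rfl h]
  simp only [mul_assoc, ← Finset.mul_sum]
  rw [sum_pm (by rw [mem_SBox]; exact ⟨by omega, by omega⟩) f]

lemma sums6 (h1 : 0 < k) (h2 : k < l) (h3 : l < s) :
    ∑ w ∈ SBox s, factorRate s (l,k) w * f w
      = f (l+1,k+1) + f (l+1,k-1) + 2 * f (l-1,k+1) + 2 * f (l-1,k-1) := by
  have h : ∀ w ∈ SBox s, factorRate s (l,k) w * f w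
      = (pm (l+1,k+1) w + pm (l+1,k-1) w + 2 * pm (l-1,k+1) w + 2 * pm (l-1,k-1) w) * f w :=
    fun w _ => by rw [nf6 s l k w h1 h2 h3]
  rw [Finset.sum_congr rfl h]
  simp only [add_mul, mul_assoc, Finset.sum_add_distrib, ← Finset.mul_sum]
  rw [sum_pm (by rw [mem_SBox]; exact ⟨by omega, by omega⟩) f, sum_pm (by rw [mem_SBox]; exact ⟨by omega, by omega⟩) f,
    sum_pm (by rw [mem_SBox]; exact ⟨by omega, by omega⟩) f, sum_pm (by rw [mem_SBox]; exact ⟨by omega, by omega⟩) f]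

lemma sums7 (h1 : l = s) (h2 : 0 < k) (h3 : k < s) :
    ∑ w ∈ SBox s, factorRate s (l,k) w * f w = f (s-1,k-1) + f (s-1,k+1) := by
  have h : ∀ w ∈ SBox s, factorRate s (l,k) w * f w
      = (pm (s-1,k-1) w + pm (s-1,k+1) w) * f w := fun w _ => by rw [nf7 s l k w h1 h2 h3]
  rw [Finset.sum_congr rfl h]
  simp only [add_mul, Finset.sum_add_distrib]
  rw [sum_pm (by rw [mem_SBox]; exact ⟨by omega, by omega⟩) f, sum_pm (by rw [mem_SBox]; exact ⟨by omega, by omega⟩) f]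

end Sums

open Classical in
noncomputable def G1 (s : ℕ) (v : ℕ × ℕ) : ℝ :=
  2 * pm (1,1) v - 2 * pm (s,s) v
    + 6 * (if v.2 = 0 ∧ 1 ≤ v.1 ∧ v.1 ≤ s then 1 else 0) - 4 * pm (s,0) v

open Classical in
noncomputable def G2 (s : ℕ) (v : ℕ × ℕ) : ℝ :=
  6 + 2 * pm (1,1) v - 4 * (if v.1 = s ∧ v.2 < s then 1 else 0)
    - (4 + 4 * (s:ℝ)) * pm (s,s) v


lemma hG1 (s : ℕ) (hs : 2 ≤ s) : ∀ v, ValidState s v →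
    (∑ w ∈ SBox s, factorRate s v w * ((w.2 : ℝ)))
      - ((v.2 : ℝ)) * (∑ w ∈ SBox s, factorRate s v w) = G1 s v := by
  rintro ⟨l, k⟩ hv
  obtain ⟨a1, a2, a3, a4⟩ := hv
  simp only at a1 a2 a3 a4
  have ds : ((s - 1 : ℕ) : ℝ) = (s : ℝ) - 1 := by
    rw [Nat.cast_sub (by omega)]; norm_num
  by_cases e0 : k = l
  · by_cases e1 : l = 1
    · have R : ∑ w ∈ SBox s, factorRate s (l,k) w = 4 := by
        have := sums1 s l k (fun _ => (1:ℝ)) hs e1 (by omega)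
        simp only [mul_one] at this; rw [this]; try norm_num
      rw [sums1 s l k (fun w => ((w.2 : ℝ))) hs e1 (by omega), R]
      simp only [G1, pm, Prod.mk.injEq]
      rw [if_pos (show l = 1 ∧ k = 1 from ⟨by omega, by omega⟩),
        if_neg (show ¬(l = s ∧ k = s) by omega),
        if_neg (show ¬(k = 0 ∧ 1 ≤ l ∧ l ≤ s) by omega),
        if_neg (show ¬(l = s ∧ k = 0) by omega)]
      have ck : (k : ℝ) = 1 := by
        have h9 : k = 1 := by omega
        exact_mod_cast h9
      rw [ck]; norm_num
    · by_cases e2 : l = s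
      · have R : ∑ w ∈ SBox s, factorRate s (l,k) w = 2 := by
          have := sums3 s l k (fun _ => (1:ℝ)) e2 (by omega) hs
          simp only [mul_one] at this; rw [this]; try norm_num
        rw [sums3 s l k (fun w => ((w.2 : ℝ))) e2 (by omega) hs, R]
        simp only [G1, pm, Prod.mk.injEq]
        rw [if_neg (show ¬(l = 1 ∧ k = 1) by omega),
          if_pos (show l = s ∧ k = s from ⟨by omega, by omega⟩),
          if_neg (show ¬(k = 0 ∧ 1 ≤ l ∧ l ≤ s) by omega),
          if_neg (show ¬(l = s ∧ k = 0) by omega)]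
        have ck : (k : ℝ) = (s : ℝ) := by
          have h9 : k = s := by omega
          exact_mod_cast h9
        rw [ds, ck]; ring
      · have h2 : 1 < l := by omega
        have h3 : l < s := by omega
        have R : ∑ w ∈ SBox s, factorRate s (l,k) w = 6 := by
          have := sums2 s l k (fun _ => (1:ℝ)) e0 h2 h3
          simp only [mul_one] at this; rw [this]; try norm_num
        rw [sums2 s l k (fun w => ((w.2 : ℝ))) e0 h2 h3, R]
        simp only [G1, pm, Prod.mk.injEq]
        rw [if_neg (show ¬(l = 1 ∧ k = 1) by omega),
          if_neg (show ¬(l = s ∧ k = s) by omega),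
          if_neg (show ¬(k = 0 ∧ 1 ≤ l ∧ l ≤ s) by omega),
          if_neg (show ¬(l = s ∧ k = 0) by omega)]
        have dl : ((l - 1 : ℕ) : ℝ) = (l : ℝ) - 1 := by
          rw [Nat.cast_sub (by omega)]; norm_num
        have ck : (k : ℝ) = (l : ℝ) := by exact_mod_cast e0
        rw [dl, ck]; push_cast; ring
  · by_cases e3 : k = 0
    · by_cases e2 : l = s
      · have R : ∑ w ∈ SBox s, factorRate s (l,k) w = 2 := by
          have := sums5 s l k (fun _ => (1:ℝ)) e2 e3 hs
          simp only [mul_one] at this; rw [this]; try norm_num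
        rw [sums5 s l k (fun w => ((w.2 : ℝ))) e2 e3 hs, R]
        simp only [G1, pm, Prod.mk.injEq]
        rw [if_neg (show ¬(l = 1 ∧ k = 1) by omega),
          if_neg (show ¬(l = s ∧ k = s) by omega),
          if_pos (show k = 0 ∧ 1 ≤ l ∧ l ≤ s from ⟨by omega, by omega, by omega⟩),
          if_pos (show l = s ∧ k = 0 from ⟨by omega, by omega⟩)]
        have ck : (k : ℝ) = 0 := by exact_mod_cast e3
        rw [ck]; norm_num
      · have h2 : 0 < l := by omega
        have h3 : l < s := by omega
        have R : ∑ w ∈ SBox s, factorRate s (l,k) w = 6 := by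
          have := sums4 s l k (fun _ => (1:ℝ)) e3 h2 h3
          simp only [mul_one] at this; rw [this]; try norm_num
        rw [sums4 s l k (fun w => ((w.2 : ℝ))) e3 h2 h3, R]
        simp only [G1, pm, Prod.mk.injEq]
        rw [if_neg (show ¬(l = 1 ∧ k = 1) by omega),
          if_neg (show ¬(l = s ∧ k = s) by omega),
          if_pos (show k = 0 ∧ 1 ≤ l ∧ l ≤ s from ⟨by omega, by omega, by omega⟩),
          if_neg (show ¬(l = s ∧ k = 0) by omega)]
        have ck : (k : ℝ) = 0 := by exact_mod_cast e3
        rw [ck]; norm_num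
    · by_cases e2 : l = s
      · have h2 : 0 < k := by omega
        have h3 : k < s := by omega
        have R : ∑ w ∈ SBox s, factorRate s (l,k) w = 2 := by
          have := sums7 s l k (fun _ => (1:ℝ)) e2 h2 h3
          simp only [mul_one] at this; rw [this]; try norm_num
        rw [sums7 s l k (fun w => ((w.2 : ℝ))) e2 h2 h3, R]
        simp only [G1, pm, Prod.mk.injEq]
        rw [if_neg (show ¬(l = 1 ∧ k = 1) by omega),
          if_neg (show ¬(l = s ∧ k = s) by omega),
          if_neg (show ¬(k = 0 ∧ 1 ≤ l ∧ l ≤ s) by omega),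
          if_neg (show ¬(l = s ∧ k = 0) by omega)]
        have dk : ((k - 1 : ℕ) : ℝ) = (k : ℝ) - 1 := by
          rw [Nat.cast_sub (by omega)]; norm_num
        rw [dk]; push_cast; ring
      · have h2 : 0 < k := by omega
        have h2' : k < l := by omega
        have h3 : l < s := by omega
        have R : ∑ w ∈ SBox s, factorRate s (l,k) w = 6 := by
          have := sums6 s l k (fun _ => (1:ℝ)) h2 h2' h3
          simp only [mul_one] at this; rw [this]; try norm_num
        rw [sums6 s l k (fun w => ((w.2 : ℝ))) h2 h2' h3, R]
        simp only [G1, pm, Prod.mk.injEq]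
        rw [if_neg (show ¬(l = 1 ∧ k = 1) by omega),
          if_neg (show ¬(l = s ∧ k = s) by omega),
          if_neg (show ¬(k = 0 ∧ 1 ≤ l ∧ l ≤ s) by omega),
          if_neg (show ¬(l = s ∧ k = 0) by omega)]
        have dk : ((k - 1 : ℕ) : ℝ) = (k : ℝ) - 1 := by
          rw [Nat.cast_sub (by omega)]; norm_num
        rw [dk]; push_cast; ring

lemma hG2 (s : ℕ) (hs : 2 ≤ s) : ∀ v, ValidState s v →
    (∑ w ∈ SBox s, factorRate s v w * ((w.2 : ℝ))^2)
      - ((v.2 : ℝ))^2 * (∑ w ∈ SBox s, factorRate s v w) = G2 s v := by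
  rintro ⟨l, k⟩ hv
  obtain ⟨a1, a2, a3, a4⟩ := hv
  simp only at a1 a2 a3 a4
  have ds : ((s - 1 : ℕ) : ℝ) = (s : ℝ) - 1 := by
    rw [Nat.cast_sub (by omega)]; norm_num
  by_cases e0 : k = l
  · by_cases e1 : l = 1
    · have R : ∑ w ∈ SBox s, factorRate s (l,k) w = 4 := by
        have := sums1 s l k (fun _ => (1:ℝ)) hs e1 (by omega)
        simp only [mul_one] at this; rw [this]; try norm_num
      rw [sums1 s l k (fun w => ((w.2 : ℝ))^2) hs e1 (by omega), R]
      simp only [G2, pm, Prod.mk.injEq]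
      rw [if_pos (show l = 1 ∧ k = 1 from ⟨by omega, by omega⟩),
        if_neg (show ¬(l = s ∧ k < s) by omega),
        if_neg (show ¬(l = s ∧ k = s) by omega)]
      have ck : (k : ℝ) = 1 := by
        have h9 : k = 1 := by omega
        exact_mod_cast h9
      rw [ck]; norm_num
    · by_cases e2 : l = s
      · have R : ∑ w ∈ SBox s, factorRate s (l,k) w = 2 := by
          have := sums3 s l k (fun _ => (1:ℝ)) e2 (by omega) hs
          simp only [mul_one] at this; rw [this]; try norm_num
        rw [sums3 s l k (fun w => ((w.2 : ℝ))^2) e2 (by omega) hs, R]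
        simp only [G2, pm, Prod.mk.injEq]
        rw [if_neg (show ¬(l = 1 ∧ k = 1) by omega),
          if_neg (show ¬(l = s ∧ k < s) by omega),
          if_pos (show l = s ∧ k = s from ⟨by omega, by omega⟩)]
        have ck : (k : ℝ) = (s : ℝ) := by
          have h9 : k = s := by omega
          exact_mod_cast h9
        rw [ds, ck]; ring
      · have h2 : 1 < l := by omega
        have h3 : l < s := by omega
        have R : ∑ w ∈ SBox s, factorRate s (l,k) w = 6 := by
          have := sums2 s l k (fun _ => (1:ℝ)) e0 h2 h3
          simp only [mul_one] at this; rw [this]; try norm_num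
        rw [sums2 s l k (fun w => ((w.2 : ℝ))^2) e0 h2 h3, R]
        simp only [G2, pm, Prod.mk.injEq]
        rw [if_neg (show ¬(l = 1 ∧ k = 1) by omega),
          if_neg (show ¬(l = s ∧ k < s) by omega),
          if_neg (show ¬(l = s ∧ k = s) by omega)]
        have dl : ((l - 1 : ℕ) : ℝ) = (l : ℝ) - 1 := by
          rw [Nat.cast_sub (by omega)]; norm_num
        have ck : (k : ℝ) = (l : ℝ) := by exact_mod_cast e0
        rw [dl, ck]; push_cast; ring
  · by_cases e3 : k = 0
    · by_cases e2 : l = s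
      · have R : ∑ w ∈ SBox s, factorRate s (l,k) w = 2 := by
          have := sums5 s l k (fun _ => (1:ℝ)) e2 e3 hs
          simp only [mul_one] at this; rw [this]; try norm_num
        rw [sums5 s l k (fun w => ((w.2 : ℝ))^2) e2 e3 hs, R]
        simp only [G2, pm, Prod.mk.injEq]
        rw [if_neg (show ¬(l = 1 ∧ k = 1) by omega),
          if_pos (show l = s ∧ k < s from ⟨by omega, by omega⟩),
          if_neg (show ¬(l = s ∧ k = s) by omega)]
        have ck : (k : ℝ) = 0 := by exact_mod_cast e3
        rw [ck]; norm_num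
      · have h2 : 0 < l := by omega
        have h3 : l < s := by omega
        have R : ∑ w ∈ SBox s, factorRate s (l,k) w = 6 := by
          have := sums4 s l k (fun _ => (1:ℝ)) e3 h2 h3
          simp only [mul_one] at this; rw [this]; try norm_num
        rw [sums4 s l k (fun w => ((w.2 : ℝ))^2) e3 h2 h3, R]
        simp only [G2, pm, Prod.mk.injEq]
        rw [if_neg (show ¬(l = 1 ∧ k = 1) by omega),
          if_neg (show ¬(l = s ∧ k < s) by omega),
          if_neg (show ¬(l = s ∧ k = s) by omega)]
        have ck : (k : ℝ) = 0 := by exact_mod_cast e3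
        rw [ck]; norm_num
    · by_cases e2 : l = s
      · have h2 : 0 < k := by omega
        have h3 : k < s := by omega
        have R : ∑ w ∈ SBox s, factorRate s (l,k) w = 2 := by
          have := sums7 s l k (fun _ => (1:ℝ)) e2 h2 h3
          simp only [mul_one] at this; rw [this]; try norm_num
        rw [sums7 s l k (fun w => ((w.2 : ℝ))^2) e2 h2 h3, R]
        simp only [G2, pm, Prod.mk.injEq]
        rw [if_neg (show ¬(l = 1 ∧ k = 1) by omega),
          if_pos (show l = s ∧ k < s from ⟨by omega, by omega⟩),
          if_neg (show ¬(l = s ∧ k = s) by omega)]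
        have dk : ((k - 1 : ℕ) : ℝ) = (k : ℝ) - 1 := by
          rw [Nat.cast_sub (by omega)]; norm_num
        rw [dk]; push_cast; ring
      · have h2 : 0 < k := by omega
        have h2' : k < l := by omega
        have h3 : l < s := by omega
        have R : ∑ w ∈ SBox s, factorRate s (l,k) w = 6 := by
          have := sums6 s l k (fun _ => (1:ℝ)) h2 h2' h3
          simp only [mul_one] at this; rw [this]; try norm_num
        rw [sums6 s l k (fun w => ((w.2 : ℝ))^2) h2 h2' h3, R]
        simp only [G2, pm, Prod.mk.injEq]
        rw [if_neg (show ¬(l = 1 ∧ k = 1) by omega),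
          if_neg (show ¬(l = s ∧ k < s) by omega),
          if_neg (show ¬(l = s ∧ k = s) by omega)]
        have dk : ((k - 1 : ℕ) : ℝ) = (k : ℝ) - 1 := by
          rw [Nat.cast_sub (by omega)]; norm_num
        rw [dk]; push_cast; ring

lemma sum_row0 (s : ℕ) (f : ℕ × ℕ → ℝ) :
    ∑ v ∈ SBox s, (if v.2 = 0 ∧ 1 ≤ v.1 ∧ v.1 ≤ s then f v else 0)
      = ∑ l ∈ Finset.Icc 1 s, f (l,0) := by
  rw [Finset.sum_product]
  have inner : ∀ x : ℕ, ∑ y ∈ Finset.range (s+2),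
      (if ((x,y) : ℕ×ℕ).2 = 0 ∧ 1 ≤ ((x,y):ℕ×ℕ).1 ∧ ((x,y):ℕ×ℕ).1 ≤ s then f (x,y) else 0)
      = if 1 ≤ x ∧ x ≤ s then f (x,0) else 0 := by
    intro x
    rw [Finset.sum_eq_single_of_mem 0 (by simp)]
    · by_cases h : 1 ≤ x ∧ x ≤ s <;> simp [h]
    · intro y _ hy; simp [hy]
  rw [Finset.sum_congr rfl fun x _ => inner x]
  have : ∀ x : ℕ, (1 ≤ x ∧ x ≤ s) = (x ∈ Finset.Icc 1 s) := by
    intro x; simp [Finset.mem_Icc]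
  simp only [this]
  rw [Finset.sum_ite_mem]
  congr 1
  rw [Finset.inter_eq_right]
  intro x hx
  simp only [Finset.mem_Icc] at hx
  simp only [Finset.mem_range]; omega

lemma key (s : ℕ) (π : ℕ × ℕ → ℝ)
    (hsupp : ∀ v, ¬ ValidState s v → π v = 0)
    (hstat : ∀ w : ℕ × ℕ, ∑ v ∈ SBox s, π v * factorRate s v w
        = π w * ∑ v ∈ SBox s, factorRate s w v)
    (f G : ℕ × ℕ → ℝ)
    (hG : ∀ v, ValidState s v →
      (∑ w ∈ SBox s, factorRate s v w * f w) - f v * (∑ w ∈ SBox s, factorRate s v w) = G v) :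
    ∑ v ∈ SBox s, π v * G v = 0 := by
  have H : ∑ w ∈ SBox s, (∑ v ∈ SBox s, π v * factorRate s v w) * f w
      = ∑ w ∈ SBox s, (π w * ∑ v ∈ SBox s, factorRate s w v) * f w :=
    Finset.sum_congr rfl fun w _ => by rw [hstat w]
  have L1 : ∑ w ∈ SBox s, (∑ v ∈ SBox s, π v * factorRate s v w) * f w
      = ∑ v ∈ SBox s, π v * (∑ w ∈ SBox s, factorRate s v w * f w) := by
    simp only [Finset.sum_mul, Finset.mul_sum, mul_assoc]
    exact Finset.sum_comm
  have R1 : ∑ w ∈ SBox s, (π w * ∑ v ∈ SBox s, factorRate s w v) * f w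
      = ∑ v ∈ SBox s, π v * f v * (∑ w ∈ SBox s, factorRate s v w) := by
    apply Finset.sum_congr rfl; intro w _; ring
  have E : ∑ v ∈ SBox s, π v * G v
      = ∑ v ∈ SBox s, (π v * (∑ w ∈ SBox s, factorRate s v w * f w)
          - π v * f v * (∑ w ∈ SBox s, factorRate s v w)) := by
    apply Finset.sum_congr rfl; intro v _
    by_cases hv : ValidState s v
    · rw [← hG v hv]; ring
    · simp [hsupp v hv]
  rw [E, Finset.sum_sub_distrib, ← L1, ← R1, H, sub_self]

lemma A0_bound (s : ℕ) (hs : 2 ≤ s) (π : ℕ × ℕ → ℝ)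
    (hnn : ∀ v, 0 ≤ π v)
    (hsupp : ∀ v, ¬ ValidState s v → π v = 0)
    (hprob : ∑ v ∈ SBox s, π v = 1)
    (hstat : ∀ w : ℕ × ℕ, ∑ v ∈ SBox s, π v * factorRate s v w
        = π w * ∑ v ∈ SBox s, factorRate s w v) :
    ∑ l ∈ Finset.Icc 1 s, π (l,0) ≤ 2 / ((s:ℝ) + 1) := by
  have mem11 : ((1,1) : ℕ×ℕ) ∈ SBox s := by rw [mem_SBox]; exact ⟨by omega, by omega⟩
  have memss : ((s,s) : ℕ×ℕ) ∈ SBox s := by rw [mem_SBox]; exact ⟨by omega, by omega⟩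
  have mems0 : ((s,0) : ℕ×ℕ) ∈ SBox s := by rw [mem_SBox]; exact ⟨by omega, by omega⟩
  have E1 := key s π hsupp hstat (fun w => ((w.2 : ℝ))) (G1 s) (hG1 s hs)
  have E2 := key s π hsupp hstat (fun w => ((w.2 : ℝ))^2) (G2 s) (hG2 s hs)
  have split1 : ∀ v ∈ SBox s, π v * G1 s v
      = 2 * (pm (1,1) v * π v) - 2 * (pm (s,s) v * π v)
        + 6 * (if v.2 = 0 ∧ 1 ≤ v.1 ∧ v.1 ≤ s then π v else 0) - 4 * (pm (s,0) v * π v) := by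
    intro v _
    by_cases h : v.2 = 0 ∧ 1 ≤ v.1 ∧ v.1 ≤ s
    · simp only [G1, if_pos h]; ring
    · simp only [G1, if_neg h]; ring
  rw [Finset.sum_congr rfl split1, Finset.sum_sub_distrib, Finset.sum_add_distrib,
    Finset.sum_sub_distrib] at E1
  simp only [← Finset.mul_sum] at E1
  rw [sum_pm mem11 π, sum_pm memss π, sum_pm mems0 π, sum_row0 s π] at E1
  have split2 : ∀ v ∈ SBox s, π v * G2 s v
      = 6 * π v + 2 * (pm (1,1) v * π v)
        - 4 * (if v.1 = s ∧ v.2 < s then π v else 0) - (4 + 4*(s:ℝ)) * (pm (s,s) v * π v) := by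
    intro v _
    by_cases h : v.1 = s ∧ v.2 < s
    · simp only [G2, if_pos h]; ring
    · simp only [G2, if_neg h]; ring
  rw [Finset.sum_congr rfl split2, Finset.sum_sub_distrib, Finset.sum_sub_distrib,
    Finset.sum_add_distrib] at E2
  simp only [← Finset.mul_sum] at E2
  rw [sum_pm mem11 π, sum_pm memss π, hprob] at E2
  set C := ∑ v ∈ SBox s, (if v.1 = s ∧ v.2 < s then π v else 0) with hCdef
  have hC : 0 ≤ C := Finset.sum_nonneg fun v _ => by
    split_ifs
    · exact hnn v
    · exact le_refl 0
  set A0 := ∑ l ∈ Finset.Icc 1 s, π (l,0) with hA0def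
  have hA0nn : 0 ≤ A0 := Finset.sum_nonneg fun l _ => hnn _
  have hs0le : π (s,0) ≤ A0 := by
    apply Finset.single_le_sum (f := fun l => π (l,0)) (fun i _ => hnn _)
    simp only [Finset.mem_Icc]; omega
  have h11le : π (1,1) ≤ 1 := by
    rw [← hprob]; exact Finset.single_le_sum (fun i _ => hnn i) mem11
  have h11nn := hnn (1,1)
  have hssnn := hnn (s,s)
  have key1 : A0 ≤ π (s,s) := by linarith
  have key2 : (4 + 4*(s:ℝ)) * π (s,s) ≤ 8 := by linarith
  have hpos : (0:ℝ) < 4 + 4*(s:ℝ) := by positivity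
  have h8 : (4 + 4*(s:ℝ)) * A0 ≤ 8 :=
    le_trans (mul_le_mul_of_nonneg_left key1 (le_of_lt hpos)) key2
  rw [le_div_iff₀ (by positivity : (0:ℝ) < (s:ℝ) + 1)]
  nlinarith [h8]


theorem factor_chain_stationary_mass_of_B_tendsto_zero
    -- Pis s is, for every s, a stationary distribution of the factor chain:
    (Pis : ℕ → ℕ × ℕ → ℝ)
    (hnonneg : ∀ s v, 0 ≤ Pis s v)
    (hsupp : ∀ s v, ¬ ValidState s v → Pis s v = 0)
    (hprob : ∀ s : ℕ, 2 ≤ s →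
      ∑ v ∈ Finset.range (s + 2) ×ˢ Finset.range (s + 2), Pis s v = 1)
    -- stationarity: Π Q = 0, i.e. inflow = outflow at every state
    (hstat : ∀ s : ℕ, 2 ≤ s → ∀ w : ℕ × ℕ,
      ∑ v ∈ Finset.range (s + 2) ×ˢ Finset.range (s + 2), Pis s v * factorRate s v w
        = Pis s w * ∑ v ∈ Finset.range (s + 2) ×ˢ Finset.range (s + 2), factorRate s w v) :
    -- then Π_s(B_s) → 0 as s → ∞, where B_s = {(l,0) : 1 ≤ l ≤ s}
    Filter.Tendsto (fun s : ℕ => ∑ l ∈ Finset.Icc 1 s, Pis s (l, 0))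
      Filter.atTop (nhds 0) := by
  have hb : ∀ s : ℕ, 2 ≤ s → ∑ l ∈ Finset.Icc 1 s, Pis s (l,0) ≤ 2/((s:ℝ)+1) :=
    fun s hs => A0_bound s hs (Pis s) (hnonneg s) (hsupp s) (hprob s hs) (hstat s hs)
  have h0 : ∀ s : ℕ, 0 ≤ ∑ l ∈ Finset.Icc 1 s, Pis s (l,0) :=
    fun s => Finset.sum_nonneg fun l _ => hnonneg s _
  have htop : Filter.Tendsto (fun s : ℕ => 2/((s:ℝ)+1)) Filter.atTop (nhds 0) := by
    have h1 := tendsto_const_div_atTop_nhds_zero_nat (2:ℝ)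
    have comp := h1.comp (Filter.tendsto_add_atTop_nat 1)
    have : (fun n : ℕ => (2:ℝ) / (n + 1)) = (fun n : ℕ => (2:ℝ) / n) ∘ (fun n => n + 1) := by
      funext n; simp only [Function.comp]; push_cast; ring_nf
    rw [this]; exact comp
  apply tendsto_of_tendsto_of_tendsto_of_le_of_le' tendsto_const_nhds htop
  · exact Filter.Eventually.of_forall h0
  · filter_upwards [Filter.eventually_ge_atTop 2] with s hs using hb s hs
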